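/- For every natural number n, there exists a set P of n points in ℝ² such that at least ⌊n/4⌋ distinct positive real numbers d each occur as the distance ‖p - q‖ for at least n + 1 unordered pairs {p, q} of distinct points of P. -/

import Mathlib

/-- The point (x, y) in the Euclidean plane. -/
noncomputable def pt (x y : ℝ) : EuclideanSpace ℝ (Fin 2) :=
  (WithLp.equiv 2 (Fin 2 → ℝ)).symm ![x, y]

/-- Vertex `j` of the regular `N`-gon with center `c`, radius `r`, phase `φ`. -/
noncomputable def vtx (c : EuclideanSpace ℝ (Fin 2)) (r φ : ℝ) (N j : ℕ) :
    EuclideanSpace ℝ (Fin 2) :=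
  c + pt (r * Real.cos (2 * Real.pi * j / N + φ)) (r * Real.sin (2 * Real.pi * j / N + φ))

/-- The distance `d` occurs at least `t` times (as unordered pairs) in the point set `P`:
there are at least `2 * t` ordered pairs of distinct points of `P` at distance `d`. -/
def occursAtLeast (P : Set (EuclideanSpace ℝ (Fin 2))) (d : ℝ) (t : ℕ) : Prop :=
  2 * t ≤ {pq : EuclideanSpace ℝ (Fin 2) × EuclideanSpace ℝ (Fin 2) |
      pq.1 ∈ P ∧ pq.2 ∈ P ∧ pq.1 ≠ pq.2 ∧ dist pq.1 pq.2 = d}.ncard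

/-- Rotation of the plane by angle `θ` about the point `a`. -/
noncomputable def rotAbout (a : EuclideanSpace ℝ (Fin 2)) (θ : ℝ)
    (p : EuclideanSpace ℝ (Fin 2)) : EuclideanSpace ℝ (Fin 2) :=
  a + pt (Real.cos θ * (p - a) 0 - Real.sin θ * (p - a) 1)
         (Real.sin θ * (p - a) 0 + Real.cos θ * (p - a) 1)


section ErdosRich

open Complex Finset

open Complex Finset

noncomputable def vv (N k : ℕ) : ℂ := Complex.exp ((2 * Real.pi * k / N : ℝ) * Complex.I)

lemma vv_abs (N k : ℕ) : ‖vv N k‖ = 1 := Complex.norm_exp_ofReal_mul_I _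

lemma vv_zero (N : ℕ) : vv N 0 = 1 := by simp [vv]

lemma vv_add (N a b : ℕ) : vv N (a + b) = vv N a * vv N b := by
  rw [vv, vv, vv, ← Complex.exp_add]
  congr 1
  push_cast
  ring

lemma vv_N (N : ℕ) (hN : N ≠ 0) : vv N N = 1 := by
  have : (2 * Real.pi * N / N : ℝ) = 2 * Real.pi := by
    field_simp
  rw [vv, this]
  have h := Complex.exp_two_pi_mul_I
  convert h using 2
  push_cast
  ring

lemma vv_inj {N a b : ℕ} (ha : a < N) (hb : b < N) (h : vv N a = vv N b) : a = b := by
  rw [vv, vv, Complex.exp_eq_exp_iff_exists_int] at h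
  obtain ⟨m, hm⟩ := h
  have him := congrArg Complex.im hm
  simp [Complex.add_im, Complex.mul_im, Complex.mul_re, Complex.I_re, Complex.I_im] at him
  -- him should say: 2πa/N = 2πb/N + m * 2π  (roughly)
  have hNpos : (0:ℝ) < N := by exact_mod_cast Nat.pos_of_ne_zero (by omega)
  have h2 : (2 * Real.pi) * (a:ℝ) = (2 * Real.pi) * (b + m * N) := by
    field_simp at him
    linear_combination (2 * Real.pi) * him
  have h3 : (a:ℝ) = b + m * N := by
    have h2π : (0:ℝ) < 2 * Real.pi := by positivity
    exact mul_left_cancel₀ (ne_of_gt h2π) h2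
  have h4 : (a:ℤ) = b + m * N := by exact_mod_cast h3
  have : m = 0 := by
    rcases lt_trichotomy m 0 with h | h | h
    · nlinarith [h4, (by exact_mod_cast ha : (a:ℤ) < N), (by exact_mod_cast hb : (b:ℤ) < N),
        (by positivity : (0:ℤ) ≤ (a:ℤ)), (by positivity : (0:ℤ) ≤ (b:ℤ)),
        (by exact_mod_cast hNpos : (0:ℤ) < (N:ℤ))]
    · exact h
    · nlinarith [h4, (by exact_mod_cast ha : (a:ℤ) < N), (by exact_mod_cast hb : (b:ℤ) < N),
        (by positivity : (0:ℤ) ≤ (a:ℤ)), (by positivity : (0:ℤ) ≤ (b:ℤ)),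
        (by exact_mod_cast hNpos : (0:ℤ) < (N:ℤ))]
  subst this
  simp at h4
  exact_mod_cast h4

lemma vv_ne_zero (N k : ℕ) : vv N k ≠ 0 := Complex.exp_ne_zero _

lemma vv_add_mul (N r q : ℕ) (hN : N ≠ 0) : vv N (r + N * q) = vv N r := by
  induction q with
  | zero => simp
  | succ q ih =>
    have h : r + N * (q + 1) = (r + N * q) + N := by ring
    rw [h, vv_add, vv_N N hN, mul_one, ih]

lemma vv_mod (N m : ℕ) (hN : N ≠ 0) : vv N m = vv N (m % N) := by
  conv_lhs => rw [← Nat.mod_add_div m N]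
  exact vv_add_mul N (m % N) (m / N) hN

lemma vv_normSq (N k : ℕ) : Complex.normSq (vv N k) = 1 := by
  have := vv_abs N k
  rw [← Complex.sq_norm, this, one_pow]

lemma vv_re (N k : ℕ) : (vv N k).re = Real.cos (2 * Real.pi * k / N) :=
  Complex.exp_ofReal_mul_I_re _

lemma vv_im (N k : ℕ) : (vv N k).im = Real.sin (2 * Real.pi * k / N) :=
  Complex.exp_ofReal_mul_I_im _

lemma normSq_one_sub_vv (N k : ℕ) :
    Complex.normSq (1 - vv N k) = 2 - 2 * Real.cos (2 * Real.pi * k / N) := by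
  rw [Complex.normSq_apply, Complex.sub_re, Complex.sub_im, Complex.one_re, Complex.one_im,
    vv_re, vv_im]
  nlinarith [Real.sin_sq_add_cos_sq (2 * Real.pi * k / N)]

lemma dist_vv (N a k : ℕ) : dist (vv N a) (vv N (a + k)) = ‖1 - vv N k‖ := by
  rw [Complex.dist_eq, vv_add]
  have : vv N a - vv N a * vv N k = vv N a * (1 - vv N k) := by ring
  rw [this, norm_mul, vv_abs, one_mul]

lemma dist_vv' (N a k : ℕ) (hN : N ≠ 0) (hk : k ≤ N) :
    dist (vv N a) (vv N (a + (N - k))) = ‖1 - vv N k‖ := by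
  rw [dist_vv]
  have h1 : ‖vv N k‖ * ‖1 - vv N (N - k)‖ = ‖1 - vv N (N - k)‖ := by
    rw [vv_abs, one_mul]
  rw [← h1, ← norm_mul]
  have h3 : k + (N - k) = N := by omega
  have h2 : vv N k * (1 - vv N (N - k)) = vv N k - vv N N := by
    have := vv_add N k (N - k)
    rw [h3] at this
    linear_combination this
  rw [h2, vv_N N hN]
  exact norm_sub_rev _ _

lemma unit_pair {z₁ z₂ w₁ w₂ : ℂ} (h₁ : Complex.normSq z₁ = 1) (h₂ : Complex.normSq z₂ = 1)
    (h₃ : Complex.normSq w₁ = 1) (h₄ : Complex.normSq w₂ = 1)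
    (hsum : z₁ + z₂ = w₁ + w₂) (hne : w₁ + w₂ ≠ 0) :
    (z₁ = w₁ ∧ z₂ = w₂) ∨ (z₁ = w₂ ∧ z₂ = w₁) := by
  have c₁ : (starRingEnd ℂ) z₁ * z₁ = 1 := by
    rw [← Complex.normSq_eq_conj_mul_self, h₁]; norm_num
  have c₂ : (starRingEnd ℂ) z₂ * z₂ = 1 := by
    rw [← Complex.normSq_eq_conj_mul_self, h₂]; norm_num
  have c₃ : (starRingEnd ℂ) w₁ * w₁ = 1 := by
    rw [← Complex.normSq_eq_conj_mul_self, h₃]; norm_num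
  have c₄ : (starRingEnd ℂ) w₂ * w₂ = 1 := by
    rw [← Complex.normSq_eq_conj_mul_self, h₄]; norm_num
  have hcs : (starRingEnd ℂ) (w₁ + w₂) ≠ 0 := by
    intro h
    apply hne
    have := congrArg (starRingEnd ℂ) h
    simpa using this
  have e₁ : (starRingEnd ℂ) (w₁ + w₂) * (z₁ * z₂) = w₁ + w₂ := by
    rw [← hsum, map_add]
    linear_combination z₂ * c₁ + z₁ * c₂
  have e₂ : (starRingEnd ℂ) (w₁ + w₂) * (w₁ * w₂) = w₁ + w₂ := by
    rw [map_add]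
    linear_combination w₂ * c₃ + w₁ * c₄
  have hp : z₁ * z₂ = w₁ * w₂ := mul_left_cancel₀ hcs (e₁.trans e₂.symm)
  have hq : (w₁ - z₁) * (w₁ - z₂) = 0 := by
    linear_combination (-w₁) * hsum + hp
  rcases mul_eq_zero.mp hq with h | h
  · left
    have hz : z₁ = w₁ := (sub_eq_zero.mp h).symm
    exact ⟨hz, by linear_combination hsum - hz⟩
  · right
    have hz : z₂ = w₁ := (sub_eq_zero.mp h).symm
    exact ⟨by linear_combination hsum - hz, hz⟩

lemma main_construction (N j n : ℕ) (hN : 1 ≤ N) (hj : j = 0 ∨ (j = 1 ∧ 3 ≤ N))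
    (hn : n + 1 + j = 2 * N) :
    ∃ P : Set (EuclideanSpace ℝ (Fin 2)), P.Finite ∧ P.ncard = n ∧
      ∃ D : Finset ℝ, n / 4 ≤ D.card ∧ ∀ d ∈ D, 0 < d ∧ occursAtLeast P d (n + 1) := by
  classical
  have hNne : N ≠ 0 := by omega
  have hj1 : j ≤ 1 := by rcases hj with h | ⟨h, _⟩ <;> omega
  have hjN : j < N := by rcases hj with h | ⟨h, h3⟩ <;> omega
  set w : ℂ := vv N 0 + vv N j with hw
  have hwne : w ≠ 0 := by
    rcases hj with h0 | ⟨h1, hN3⟩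
    · rw [hw, h0, vv_zero]
      norm_num
    · intro h
      have him := congrArg Complex.im h
      rw [hw, h1, Complex.add_im, vv_im, vv_im, Complex.zero_im] at him
      have hz : Real.sin (2 * Real.pi * (0:ℕ) / N) = 0 := by
        norm_num
      rw [hz, zero_add] at him
      have hs : 0 < Real.sin (2 * Real.pi * (1:ℕ) / N) := by
        apply Real.sin_pos_of_pos_of_lt_pi
        · have : (0:ℝ) < N := by exact_mod_cast (by omega : 0 < N)
          positivity
        · push_cast
          rw [div_lt_iff₀ (by exact_mod_cast (by omega : 0 < N))]
          have h3 : (3:ℝ) ≤ N := by exact_mod_cast hN3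
          have h4 : Real.pi * 3 ≤ Real.pi * N :=
            mul_le_mul_of_nonneg_left h3 Real.pi_pos.le
          linarith [Real.pi_pos]
      linarith
  set A : Finset ℂ := (Finset.range N).image (vv N) with hA
  set B : Finset ℂ := A.image (fun z => w - z) with hB
  have hmemA : ∀ m : ℕ, vv N m ∈ A := by
    intro m
    rw [hA, vv_mod N m hNne]
    exact Finset.mem_image_of_mem _ (Finset.mem_range.mpr (Nat.mod_lt m (by omega)))
  have hv0B : vv N 0 ∈ B := by
    have : vv N 0 = w - vv N j := by rw [hw]; ring
    rw [this, hB]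
    exact Finset.mem_image_of_mem _ (hmemA j)
  have hvjB : vv N j ∈ B := by
    have : vv N j = w - vv N 0 := by rw [hw]; ring
    rw [this, hB]
    exact Finset.mem_image_of_mem _ (hmemA 0)
  have hmemB : ∀ z ∈ A, w - z ∈ B := by
    intro z hz
    rw [hB]
    exact Finset.mem_image_of_mem _ hz
  have hABsub : ∀ z : ℂ, z ∈ A → z ∈ B → z = vv N 0 ∨ z = vv N j := by
    intro z hzA hzB
    rw [hA] at hzA
    obtain ⟨a, _, rfl⟩ := Finset.mem_image.mp hzA
    rw [hB] at hzB
    obtain ⟨y, hyA, hy⟩ := Finset.mem_image.mp hzB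
    rw [hA] at hyA
    obtain ⟨b, _, rfl⟩ := Finset.mem_image.mp hyA
    have hsum : vv N a + vv N b = vv N 0 + vv N j := by
      rw [← hw]
      linear_combination -hy
    rcases unit_pair (vv_normSq N a) (vv_normSq N b) (vv_normSq N 0) (vv_normSq N j) hsum
      (hw ▸ hwne) with ⟨h, _⟩ | ⟨h, _⟩
    · exact Or.inl h
    · exact Or.inr h
  have hinjA : Set.InjOn (vv N) ↑(Finset.range N) := fun a ha b hb h =>
    vv_inj (Finset.mem_range.mp ha) (Finset.mem_range.mp hb) h
  have hcardA : A.card = N := by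
    rw [hA, Finset.card_image_of_injOn hinjA, Finset.card_range]
  have hsubinj : Function.Injective (fun z : ℂ => w - z) := by
    intro x y h
    simpa using h
  have hcardB : B.card = N := by
    rw [hB, Finset.card_image_of_injective _ hsubinj, hcardA]
  have hABeq : A ∩ B = {vv N 0, vv N j} := by
    apply Finset.ext
    intro z
    simp only [Finset.mem_inter, Finset.mem_insert, Finset.mem_singleton]
    constructor
    · rintro ⟨h1, h2⟩
      exact hABsub z h1 h2
    · rintro (rfl | rfl)
      · exact ⟨hmemA 0, hv0B⟩
      · exact ⟨hmemA j, hvjB⟩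
  have hcardAB : (A ∩ B).card = 1 + j := by
    rw [hABeq]
    rcases hj with h0 | ⟨h1, hN3⟩
    · rw [h0]
      simp
    · rw [h1]
      rw [Finset.card_insert_of_notMem (by
        simp only [Finset.mem_singleton]
        intro h
        exact absurd (vv_inj (by omega) (by omega) h) (by omega)), Finset.card_singleton]
  have hcardU : (A ∪ B).card = n := by
    have h := Finset.card_union_add_card_inter A B
    omega
  set φ := Complex.orthonormalBasisOneI.repr with hφ
  have hφinj : Function.Injective (fun z : ℂ => φ z) := φ.injective
  set Pf : Finset (EuclideanSpace ℝ (Fin 2)) := (A ∪ B).image (fun z => φ z) with hPf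
  refine ⟨↑Pf, Pf.finite_toSet, ?_, ?_⟩
  · rw [Set.ncard_coe_finset, hPf, Finset.card_image_of_injective _ hφinj, hcardU]
  set K := (N - 1) / 2 with hK
  set dd : ℕ → ℝ := fun k => ‖1 - vv N k‖ with hdd
  have hθmem : ∀ k : ℕ, k ≤ K → (2 * Real.pi * k / N) ∈ Set.Icc 0 Real.pi := by
    intro k hk
    constructor
    · have : (0:ℝ) ≤ N := by positivity
      positivity
    · rw [div_le_iff₀ (by exact_mod_cast (by omega : 0 < N))]
      have h2k : (2 * k : ℝ) ≤ N := by exact_mod_cast (by omega : 2 * k ≤ N)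
      nlinarith [Real.pi_pos]
  have hddinj : Set.InjOn dd ↑(Finset.Icc 1 K) := by
    intro k₁ hk₁ k₂ hk₂ h
    simp only [Finset.coe_Icc, Set.mem_Icc] at hk₁ hk₂
    have hns : Complex.normSq (1 - vv N k₁) = Complex.normSq (1 - vv N k₂) := by
      rw [← Complex.sq_norm, ← Complex.sq_norm]
      rw [hdd] at h
      simp only at h
      rw [h]
    rw [normSq_one_sub_vv, normSq_one_sub_vv] at hns
    have hcos : Real.cos (2 * Real.pi * k₁ / N) = Real.cos (2 * Real.pi * k₂ / N) := by
      linarith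
    have hθ := Real.strictAntiOn_cos.injOn (hθmem k₁ hk₁.2) (hθmem k₂ hk₂.2) hcos
    have hNpos : (0:ℝ) < N := by exact_mod_cast (by omega : 0 < N)
    have h' : 2 * Real.pi * (k₁:ℝ) = 2 * Real.pi * (k₂:ℝ) := by
      have h'' := congrArg (fun x : ℝ => x * N) hθ
      rw [div_mul_cancel₀ _ (ne_of_gt hNpos), div_mul_cancel₀ _ (ne_of_gt hNpos)] at h''
      exact h''
    have hfin := mul_left_cancel₀ (ne_of_gt (by positivity : (0:ℝ) < 2 * Real.pi)) h'
    exact_mod_cast hfin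
  set D : Finset ℝ := (Finset.Icc 1 K).image dd with hD
  have hcardD : D.card = K := by
    rw [hD, Finset.card_image_of_injOn hddinj, Nat.card_Icc]
    omega
  refine ⟨D, by omega, ?_⟩
  intro d hd
  rw [hD] at hd
  obtain ⟨k, hkmem, rfl⟩ := Finset.mem_image.mp hd
  rw [Finset.mem_Icc] at hkmem
  obtain ⟨hk1, hk2⟩ := hkmem
  have hkN : k < N := by omega
  have h2k : 2 * k < N := by omega
  have hvk1 : vv N k ≠ 1 := by
    intro h
    rw [← vv_zero N] at h
    exact absurd (vv_inj hkN (by omega) h) (by omega)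
  have hddpos : 0 < dd k := by
    rw [hdd]
    simp only
    rw [norm_pos_iff]
    intro h
    exact hvk1 (by linear_combination -h)
  refine ⟨hddpos, ?_⟩
  unfold occursAtLeast
  -- build the witness finset
  set g₁ : ℕ → ℂ × ℂ := fun i => (vv N i, vv N (i + k)) with hg₁
  set g₂ : ℕ → ℂ × ℂ := fun i => (vv N i, vv N (i + (N - k))) with hg₂
  have hvNk1 : vv N (N - k) ≠ 1 := by
    intro h
    rw [← vv_zero N] at h
    exact absurd (vv_inj (by omega) (by omega) h) (by omega)
  have hT₁prop : ∀ i : ℕ, ∀ g ∈ [g₁, g₂], (g i).1 ∈ A ∧ (g i).2 ∈ A ∧ (g i).1 ≠ (g i).2 ∧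
      dist (g i).1 (g i).2 = dd k := by
    intro i g hg
    have hclose : ∀ m : ℕ, vv N m ≠ 1 → vv N i ≠ vv N (i + m) := by
      intro m hm h
      rw [vv_add] at h
      exact hm (mul_left_cancel₀ (vv_ne_zero N i) (by linear_combination h)).symm
    simp only [List.mem_cons, List.mem_singleton] at hg
    rcases hg with rfl | rfl | h
    · exact ⟨hmemA i, hmemA (i + k), hclose k hvk1, dist_vv N i k⟩
    · exact ⟨hmemA i, hmemA (i + (N - k)), hclose (N - k) hvNk1, dist_vv' N i k hNne (by omega)⟩
    · cases h
  set T₁ : Finset (ℂ × ℂ) := (Finset.range N).image g₁ ∪ (Finset.range N).image g₂ with hT₁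
  set σp : ℂ × ℂ → ℂ × ℂ := fun q => (w - q.1, w - q.2) with hσp
  set T₂ : Finset (ℂ × ℂ) := T₁.image σp with hT₂
  have hg₁inj : Set.InjOn g₁ ↑(Finset.range N) := by
    intro a ha b hb h
    exact vv_inj (Finset.mem_range.mp ha) (Finset.mem_range.mp hb) (congrArg Prod.fst h)
  have hg₂inj : Set.InjOn g₂ ↑(Finset.range N) := by
    intro a ha b hb h
    exact vv_inj (Finset.mem_range.mp ha) (Finset.mem_range.mp hb) (congrArg Prod.fst h)
  have hdisj : Disjoint ((Finset.range N).image g₁) ((Finset.range N).image g₂) := by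
    rw [Finset.disjoint_left]
    intro x hx₁ hx₂
    obtain ⟨a, ha, rfl⟩ := Finset.mem_image.mp hx₁
    obtain ⟨b, hb, hba⟩ := Finset.mem_image.mp hx₂
    have h1 : vv N b = vv N a := congrArg Prod.fst hba
    have hab : b = a := vv_inj (Finset.mem_range.mp hb) (Finset.mem_range.mp ha) h1
    have h2 : vv N (b + (N - k)) = vv N (a + k) := congrArg Prod.snd hba
    rw [hab] at h2
    rw [vv_add, vv_add] at h2
    have h3 : vv N (N - k) = vv N k := mul_left_cancel₀ (vv_ne_zero N a) h2
    have := vv_inj (by omega : N - k < N) hkN h3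
    omega
  have hcardT₁ : T₁.card = 2 * N := by
    rw [hT₁, Finset.card_union_of_disjoint hdisj, Finset.card_image_of_injOn hg₁inj,
      Finset.card_image_of_injOn hg₂inj, Finset.card_range]
    ring
  have hσpinj : Function.Injective σp := by
    intro x y h
    rw [hσp] at h
    simp only [Prod.mk.injEq] at h
    have h1 : x.1 = y.1 := by linear_combination -h.1
    have h2 : x.2 = y.2 := by linear_combination -h.2
    exact Prod.ext h1 h2
  have hcardT₂ : T₂.card = 2 * N := by
    rw [hT₂, Finset.card_image_of_injective _ hσpinj, hcardT₁]
  have hT₁mem : ∀ x ∈ T₁, x.1 ∈ A ∧ x.2 ∈ A ∧ x.1 ≠ x.2 ∧ dist x.1 x.2 = dd k := by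
    intro x hx
    rw [hT₁, Finset.mem_union] at hx
    rcases hx with hx | hx
    · obtain ⟨i, _, rfl⟩ := Finset.mem_image.mp hx
      exact hT₁prop i g₁ (by simp)
    · obtain ⟨i, _, rfl⟩ := Finset.mem_image.mp hx
      exact hT₁prop i g₂ (by simp)
  have hT₂mem : ∀ x ∈ T₂, x.1 ∈ B ∧ x.2 ∈ B ∧ x.1 ≠ x.2 ∧ dist x.1 x.2 = dd k := by
    intro x hx
    rw [hT₂] at hx
    obtain ⟨y, hy, rfl⟩ := Finset.mem_image.mp hx
    obtain ⟨hy1, hy2, hy3, hy4⟩ := hT₁mem y hy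
    refine ⟨hmemB _ hy1, hmemB _ hy2, ?_, ?_⟩
    · rw [hσp]
      simp only [Prod.mk.injEq, ne_eq]
      intro h
      exact hy3 (by linear_combination -h)
    · rw [hσp]
      simp only
      rw [dist_eq_norm, show (w - y.1) - (w - y.2) = -(y.1 - y.2) from by ring, norm_neg,
        ← dist_eq_norm]
      exact hy4
  have hcap : (T₁ ∩ T₂).card ≤ 2 * j := by
    rcases hj with h0 | ⟨h1, hN3⟩
    · have : T₁ ∩ T₂ = ∅ := by
        rw [Finset.eq_empty_iff_forall_notMem]
        intro x hx
        rw [Finset.mem_inter] at hx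
        obtain ⟨hx₁, hx₂⟩ := hx
        obtain ⟨ha1, ha2, hne', _⟩ := hT₁mem x hx₁
        obtain ⟨hb1, hb2, _, _⟩ := hT₂mem x hx₂
        have e1 := hABsub x.1 ha1 hb1
        have e2 := hABsub x.2 ha2 hb2
        rw [h0] at e1 e2
        rcases e1 with e1 | e1 <;> rcases e2 with e2 | e2 <;>
          exact hne' (e1.trans e2.symm)
      rw [this]
      simp
    · have hsub : T₁ ∩ T₂ ⊆ {(vv N 0, vv N j), (vv N j, vv N 0)} := by
        intro x hx
        rw [Finset.mem_inter] at hx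
        obtain ⟨hx₁, hx₂⟩ := hx
        obtain ⟨ha1, ha2, hne', _⟩ := hT₁mem x hx₁
        obtain ⟨hb1, hb2, _, _⟩ := hT₂mem x hx₂
        have e1 := hABsub x.1 ha1 hb1
        have e2 := hABsub x.2 ha2 hb2
        simp only [Finset.mem_insert, Finset.mem_singleton]
        rcases e1 with e1 | e1 <;> rcases e2 with e2 | e2
        · exact absurd (e1.trans e2.symm) hne'
        · left
          exact Prod.ext e1 e2
        · right
          exact Prod.ext e1 e2
        · exact absurd (e1.trans e2.symm) hne'
      calc (T₁ ∩ T₂).card ≤ ({(vv N 0, vv N j), (vv N j, vv N 0)} : Finset (ℂ × ℂ)).card :=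
            Finset.card_le_card hsub
        _ ≤ 2 := by
            apply le_trans (Finset.card_insert_le _ _)
            simp [h1]
        _ = 2 * j := by omega
  have hcardT : 2 * (n + 1) ≤ (T₁ ∪ T₂).card := by
    have h := Finset.card_union_add_card_inter T₁ T₂
    omega
  set TE : Finset (EuclideanSpace ℝ (Fin 2) × EuclideanSpace ℝ (Fin 2)) :=
    (T₁ ∪ T₂).image (fun x => (φ x.1, φ x.2)) with hTE
  have hTEinj : Function.Injective (fun x : ℂ × ℂ => ((φ x.1 : EuclideanSpace ℝ (Fin 2)), (φ x.2 : EuclideanSpace ℝ (Fin 2)))) := by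
    intro x y h
    simp only [Prod.mk.injEq] at h
    exact Prod.ext (φ.injective h.1) (φ.injective h.2)
  have hcardTE : 2 * (n + 1) ≤ TE.card := by
    rw [hTE, Finset.card_image_of_injective _ hTEinj]
    exact hcardT
  -- the target set
  set S : Set (EuclideanSpace ℝ (Fin 2) × EuclideanSpace ℝ (Fin 2)) :=
    {pq | pq.1 ∈ (↑Pf : Set (EuclideanSpace ℝ (Fin 2))) ∧ pq.2 ∈ (↑Pf : Set (EuclideanSpace ℝ (Fin 2))) ∧
      pq.1 ≠ pq.2 ∧ dist pq.1 pq.2 = dd k} with hS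
  have hTES : ↑TE ⊆ S := by
    intro x hx
    rw [hTE] at hx
    simp only [Finset.coe_image, Set.mem_image, Finset.mem_coe] at hx
    obtain ⟨y, hy, rfl⟩ := hx
    have hprop : y.1 ∈ A ∪ B ∧ y.2 ∈ A ∪ B ∧ y.1 ≠ y.2 ∧ dist y.1 y.2 = dd k := by
      rw [Finset.mem_union] at hy
      rcases hy with hy | hy
      · obtain ⟨h1, h2, h3, h4⟩ := hT₁mem y hy
        exact ⟨Finset.mem_union_left _ h1, Finset.mem_union_left _ h2, h3, h4⟩
      · obtain ⟨h1, h2, h3, h4⟩ := hT₂mem y hy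
        exact ⟨Finset.mem_union_right _ h1, Finset.mem_union_right _ h2, h3, h4⟩
    obtain ⟨h1, h2, h3, h4⟩ := hprop
    refine ⟨?_, ?_, ?_, ?_⟩
    · rw [hPf]
      exact Finset.mem_coe.mpr (Finset.mem_image_of_mem _ h1)
    · rw [hPf]
      exact Finset.mem_coe.mpr (Finset.mem_image_of_mem _ h2)
    · simp only [ne_eq, Prod.mk.injEq]
      intro h
      exact h3 (φ.injective h)
    · rw [φ.dist_map]
      exact h4
  have hSfin : S.Finite := by
    apply Set.Finite.subset (Set.Finite.prod Pf.finite_toSet Pf.finite_toSet)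
    intro x hx
    exact ⟨hx.1, hx.2.1⟩
  calc (2 * (n + 1) : ℕ) ≤ TE.card := hcardTE
    _ = (↑TE : Set (EuclideanSpace ℝ (Fin 2) × EuclideanSpace ℝ (Fin 2))).ncard :=
        (Set.ncard_coe_finset TE).symm
    _ ≤ S.ncard := Set.ncard_le_ncard hTES hSfin

theorem erdos_rich_distances (n : ℕ) :
    ∃ P : Set (EuclideanSpace ℝ (Fin 2)), P.Finite ∧ P.ncard = n ∧
      ∃ D : Finset ℝ, n / 4 ≤ D.card ∧ ∀ d ∈ D, 0 < d ∧ occursAtLeast P d (n + 1) := by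
  rcases Nat.eq_zero_or_pos n with rfl | hn0
  · exact ⟨∅, Set.finite_empty, by simp, ∅, by simp, by simp⟩
  by_cases h2 : n = 2
  · subst h2
    set φ := Complex.orthonormalBasisOneI.repr with hφ
    refine ⟨{φ 0, φ 1}, Set.toFinite _, ?_, ∅, by simp, by simp⟩
    rw [Set.ncard_pair]
    intro h
    have := φ.injective h
    norm_num at this
  rcases Nat.even_or_odd n with he | ho
  · have h4 : 4 ≤ n := by
      obtain ⟨m, hm⟩ := he
      omega
    exact main_construction (n / 2 + 1) 1 n (by omega) (Or.inr ⟨rfl, by omega⟩)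
      (by obtain ⟨m, hm⟩ := he; omega)
  · exact main_construction ((n + 1) / 2) 0 n (by omega) (Or.inl rfl)
      (by obtain ⟨m, hm⟩ := ho; omega)

end ErdosRich
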